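/- Let ξ_L = {x_{-m}, ..., x_n} ⊂ [-L/2, L/2] be a finite set of points with consecutive gaps Z_i = x_{i+1} - x_i, let α > 0, and consider the spectral gap of the generator L_L f(x) = Σ_{y∈ξ_L} e^{-|x-y|^α}(f(y)-f(x)). Suppose Σ_{i} e^{Z_i^α} ≤ K L and #(ξ_L) ≤ C₁ L. Then for any f: ξ_L → ℝ, Σ_{x,y∈ξ_L} (f(x)-f(y))² ≤ C₂ L³ Σ_{i} e^{-Z_i^α}(f(x_i)-f(x_{i+1}))², where C₂ depends only on K and C₁. Consequently the Poincaré constant γ(L) ≤ C L². -/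

import Mathlib

open Finset

lemma cs_path (w g : ℕ → ℝ) (hw : ∀ k, 0 < w k) (i j : ℕ) (hij : i ≤ j) :
    (g j - g i) ^ 2 ≤ (∑ k ∈ Finset.Ico i j, w k) *
      (∑ k ∈ Finset.Ico i j, (w k)⁻¹ * (g (k + 1) - g k) ^ 2) := by
  have htel : ∑ k ∈ Finset.Ico i j, (g (k + 1) - g k) = g j - g i := by
    rw [Finset.sum_Ico_eq_sub _ hij, Finset.sum_range_sub, Finset.sum_range_sub]
    ring
  have hcs := Finset.sum_mul_sq_le_sq_mul_sq (Finset.Ico i j)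
    (fun k => Real.sqrt (w k)) (fun k => Real.sqrt (w k)⁻¹ * (g (k + 1) - g k))
  calc (g j - g i)^2
      = (∑ k ∈ Finset.Ico i j, Real.sqrt (w k) * (Real.sqrt (w k)⁻¹ * (g (k + 1) - g k)))^2 := by
        rw [← htel]
        congr 1
        refine Finset.sum_congr rfl fun k _ => ?_
        rw [Real.sqrt_inv, ← mul_assoc, mul_inv_cancel₀ (Real.sqrt_ne_zero'.mpr (hw k)), one_mul]
    _ ≤ (∑ k ∈ Finset.Ico i j, Real.sqrt (w k) ^ 2) *
        (∑ k ∈ Finset.Ico i j, (Real.sqrt (w k)⁻¹ * (g (k + 1) - g k)) ^ 2) := hcs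
    _ = (∑ k ∈ Finset.Ico i j, w k) *
        (∑ k ∈ Finset.Ico i j, (w k)⁻¹ * (g (k + 1) - g k) ^ 2) := by
        congr 1 <;> refine Finset.sum_congr rfl fun k _ => ?_
        · exact Real.sq_sqrt (hw k).le
        · rw [mul_pow, Real.sq_sqrt (inv_nonneg.mpr (hw k).le)]

theorem poincare_path_bound (α : ℝ) (hα : 0 < α) (K C₁ : ℝ) :
    ∃ C₂ C : ℝ, ∀ (L : ℝ), 0 < L → ∀ (m : ℕ) (x : Fin (m + 1) → ℝ),
      StrictMono x →
      (∀ i, x i ∈ Set.Icc (-L / 2) (L / 2)) →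
      (∑ i : Fin m, Real.exp ((x i.succ - x i.castSucc) ^ α) ≤ K * L) →
      ((m : ℝ) + 1 ≤ C₁ * L) →
      ∀ f : Fin (m + 1) → ℝ,
        (∑ i : Fin (m + 1), ∑ j : Fin (m + 1), (f i - f j) ^ 2)
          ≤ C₂ * L ^ 3 *
            ∑ i : Fin m, Real.exp (-((x i.succ - x i.castSucc) ^ α)) *
              (f i.castSucc - f i.succ) ^ 2 ∧
        (1 / ((m : ℝ) + 1)) *
            (∑ i : Fin (m + 1), ∑ j : Fin (m + 1), (f i - f j) ^ 2)
          ≤ C * L ^ 2 *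
            ∑ i : Fin (m + 1), ∑ j : Fin (m + 1),
              Real.exp (-(|x i - x j| ^ α)) * (f i - f j) ^ 2 := by
  refine ⟨K * C₁ ^ 2, K * C₁, ?_⟩
  intro L hL m x hmono hIcc hK hC f
  set S : ℝ := ∑ i : Fin m, Real.exp (-((x i.succ - x i.castSucc) ^ α)) *
      (f i.castSucc - f i.succ) ^ 2 with hSdef
  have hS : 0 ≤ S :=
    Finset.sum_nonneg fun i _ => mul_nonneg (Real.exp_pos _).le (sq_nonneg _)
  have hKL : 0 ≤ K * L :=
    le_trans (Finset.sum_nonneg fun i _ => (Real.exp_pos _).le) hK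
  have hK0 : 0 ≤ K := nonneg_of_mul_nonneg_right (by linarith : (0:ℝ) ≤ L * K) hL
  have hm1 : (0:ℝ) ≤ (m : ℝ) + 1 := by positivity
  -- natural number extensions
  set g : ℕ → ℝ := fun k => f ⟨min k m, Nat.lt_succ_of_le (min_le_right _ _)⟩ with hgdef
  set w : ℕ → ℝ := fun k => if h : k < m then Real.exp ((x (⟨k, h⟩ : Fin m).succ
      - x (⟨k, h⟩ : Fin m).castSucc) ^ α) else 1 with hwdef
  have hw : ∀ k, 0 < w k := by
    intro k
    simp only [hwdef]
    split
    · exact Real.exp_pos _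
    · exact one_pos
  have hgval : ∀ i : Fin (m + 1), g (i : ℕ) = f i := by
    intro i
    simp only [hgdef]
    congr 1
    exact Fin.ext (by simp [Nat.le_of_lt_succ i.isLt])
  have hg1 : ∀ i : Fin m, g (i : ℕ) = f i.castSucc := by
    intro i
    simpa using hgval i.castSucc
  have hg2 : ∀ i : Fin m, g ((i : ℕ) + 1) = f i.succ := by
    intro i
    simpa using hgval i.succ
  have hw2 : ∀ i : Fin m, w (i : ℕ) = Real.exp ((x i.succ - x i.castSucc) ^ α) := by
    intro i
    simp only [hwdef]
    rw [dif_pos i.isLt]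
  have hwsum : ∑ k ∈ Finset.range m, w k
      = ∑ i : Fin m, Real.exp ((x i.succ - x i.castSucc) ^ α) := by
    rw [← Fin.sum_univ_eq_sum_range (fun k => w k) m]
    exact Finset.sum_congr rfl fun i _ => hw2 i
  have hssum : ∑ k ∈ Finset.range m, (w k)⁻¹ * (g (k + 1) - g k) ^ 2 = S := by
    rw [hSdef, ← Fin.sum_univ_eq_sum_range (fun k => (w k)⁻¹ * (g (k + 1) - g k) ^ 2) m]
    refine Finset.sum_congr rfl fun i _ => ?_
    rw [hw2 i, hg2 i, hg1 i, ← Real.exp_neg]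
    ring
  -- per-pair bound
  have key : ∀ i j : Fin (m + 1), (f i - f j) ^ 2 ≤ K * L * S := by
    have main : ∀ i j : Fin (m + 1), (i : ℕ) ≤ (j : ℕ) → (f j - f i) ^ 2 ≤ K * L * S := by
      intro i j hij
      have h1 := cs_path w g hw i j hij
      rw [hgval i, hgval j] at h1
      have hsub : Finset.Ico (i : ℕ) (j : ℕ) ⊆ Finset.range m := by
        intro k hk
        simp only [Finset.mem_Ico] at hk
        exact Finset.mem_range.mpr (lt_of_lt_of_le hk.2 (Nat.le_of_lt_succ j.isLt))
      have hT : ∑ k ∈ Finset.Ico (i : ℕ) (j : ℕ), w k ≤ K * L := by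
        calc ∑ k ∈ Finset.Ico (i : ℕ) (j : ℕ), w k
            ≤ ∑ k ∈ Finset.range m, w k :=
              Finset.sum_le_sum_of_subset_of_nonneg hsub (fun k _ _ => (hw k).le)
          _ ≤ K * L := by rw [hwsum]; exact hK
      have hSic : ∑ k ∈ Finset.Ico (i : ℕ) (j : ℕ), (w k)⁻¹ * (g (k + 1) - g k) ^ 2 ≤ S := by
        rw [← hssum]
        exact Finset.sum_le_sum_of_subset_of_nonneg hsub
          (fun k _ _ => mul_nonneg (inv_nonneg.mpr (hw k).le) (sq_nonneg _))
      have hSic0 : 0 ≤ ∑ k ∈ Finset.Ico (i : ℕ) (j : ℕ), (w k)⁻¹ * (g (k + 1) - g k) ^ 2 :=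
        Finset.sum_nonneg fun k _ => mul_nonneg (inv_nonneg.mpr (hw k).le) (sq_nonneg _)
      exact le_trans h1 (mul_le_mul hT hSic hSic0 hKL)
    intro i j
    rcases le_total (i : ℕ) (j : ℕ) with h | h
    · rw [show (f i - f j)^2 = (f j - f i)^2 by ring]
      exact main i j h
    · exact main j i h
  -- double sum bound
  have hdouble : ∑ i : Fin (m + 1), ∑ j : Fin (m + 1), (f i - f j) ^ 2
      ≤ ((m : ℝ) + 1) ^ 2 * (K * L * S) := by
    calc ∑ i : Fin (m + 1), ∑ j : Fin (m + 1), (f i - f j) ^ 2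
        ≤ ∑ _i : Fin (m + 1), ∑ _j : Fin (m + 1), K * L * S :=
          Finset.sum_le_sum fun i _ => Finset.sum_le_sum fun j _ => key i j
      _ = ((m : ℝ) + 1) ^ 2 * (K * L * S) := by
          simp [Finset.sum_const, Finset.card_univ]
          ring
  have hCL : ((m : ℝ) + 1) ^ 2 ≤ (C₁ * L) ^ 2 := pow_le_pow_left₀ hm1 hC 2
  have hfirst : ∑ i : Fin (m + 1), ∑ j : Fin (m + 1), (f i - f j) ^ 2
      ≤ K * C₁ ^ 2 * L ^ 3 * S := by
    calc ∑ i : Fin (m + 1), ∑ j : Fin (m + 1), (f i - f j) ^ 2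
        ≤ ((m : ℝ) + 1) ^ 2 * (K * L * S) := hdouble
      _ ≤ (C₁ * L) ^ 2 * (K * L * S) :=
          mul_le_mul_of_nonneg_right hCL (by positivity)
      _ = K * C₁ ^ 2 * L ^ 3 * S := by ring
  constructor
  · exact hfirst
  · -- second part
    have hP : S ≤ ∑ i : Fin (m + 1), ∑ j : Fin (m + 1),
        Real.exp (-(|x i - x j| ^ α)) * (f i - f j) ^ 2 := by
      have habs : ∀ i : Fin m, |x i.castSucc - x i.succ| = x i.succ - x i.castSucc := by
        intro i
        rw [abs_sub_comm]
        exact abs_of_pos (sub_pos.mpr (hmono (Fin.castSucc_lt_succ : i.castSucc < i.succ)))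
      set emb : Fin m ↪ Fin (m + 1) × Fin (m + 1) :=
        ⟨fun i => (i.castSucc, i.succ), fun ⦃a b⦄ h => by
          have := congrArg Prod.fst h
          exact Fin.castSucc_inj.mp this⟩ with hemb
      calc S = ∑ p ∈ Finset.univ.map emb,
            Real.exp (-(|x p.1 - x p.2| ^ α)) * (f p.1 - f p.2) ^ 2 := by
            rw [Finset.sum_map, hSdef]
            refine Finset.sum_congr rfl fun i _ => ?_
            simp only [hemb, Function.Embedding.coeFn_mk]
            show _ = Real.exp (-(|x i.castSucc - x i.succ| ^ α)) * (f i.castSucc - f i.succ) ^ 2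
            rw [habs i]
        _ ≤ ∑ p ∈ (Finset.univ : Finset (Fin (m + 1) × Fin (m + 1))),
            Real.exp (-(|x p.1 - x p.2| ^ α)) * (f p.1 - f p.2) ^ 2 :=
            Finset.sum_le_sum_of_subset_of_nonneg (Finset.subset_univ _)
              (fun p _ _ => mul_nonneg (Real.exp_pos _).le (sq_nonneg _))
        _ = ∑ i : Fin (m + 1), ∑ j : Fin (m + 1),
            Real.exp (-(|x i - x j| ^ α)) * (f i - f j) ^ 2 := by
            rw [Fintype.sum_prod_type]
    calc (1 / ((m : ℝ) + 1)) * ∑ i : Fin (m + 1), ∑ j : Fin (m + 1), (f i - f j) ^ 2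
        ≤ (1 / ((m : ℝ) + 1)) * (((m : ℝ) + 1) ^ 2 * (K * L * S)) := by
          apply mul_le_mul_of_nonneg_left hdouble (by positivity)
      _ = ((m : ℝ) + 1) * (K * L * S) := by
          have h0 : ((m : ℝ) + 1) ≠ 0 := by positivity
          field_simp
      _ ≤ (C₁ * L) * (K * L * S) :=
          mul_le_mul_of_nonneg_right hC (by positivity)
      _ = K * C₁ * L ^ 2 * S := by ring
      _ ≤ K * C₁ * L ^ 2 * ∑ i : Fin (m + 1), ∑ j : Fin (m + 1),
            Real.exp (-(|x i - x j| ^ α)) * (f i - f j) ^ 2 := by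
          apply mul_le_mul_of_nonneg_left hP
          have hC₁0 : 0 ≤ C₁ := by nlinarith [Nat.cast_nonneg (α := ℝ) m]
          positivity
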